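/- arXiv:0907.1796 — 2 statements merged into one kernel-verified Lean document; each statement's English description precedes it below -/
import Mathlib

section
/- The parallel heat-bath PCA satisfies detailed balance with respect to the Gibbs measure of the four-body Hamiltonian: for every β>0, every h∈ℝ and all σ,η∈𝒮, P(σ,η)·exp(−H_β(σ)) = P(η,σ)·exp(−H_β(η)), where H_β(σ) = −βh·∑_{x∈Λ}σ(x) − ∑_{x∈Λ} log cosh(β(S_σ(x)+h)). Consequently the PCA is reversible with respect to ν(σ)=exp(−H_β(σ))/Z, Z=∑_{η∈𝒮}exp(−H_β(η)). -/
open scoped BigOperators Classical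
open Filter

namespace PCA

/-- Sites of the two-dimensional discrete torus of side `L`. -/
abbrev Site (L : ℕ) := ZMod L × ZMod L

/-- Spin configurations: `true` codes the spin `+1`, `false` codes `-1`. -/
abbrev Config (L : ℕ) := Site L → Bool

noncomputable section

/-- The real value of a spin. -/
def spin (b : Bool) : ℝ := if b then 1 else -1

def east (L : ℕ) : Site L := (1, 0)
def north (L : ℕ) : Site L := (0, 1)

variable {L : ℕ}

/-- `S_σ(x)`: the sum of the spins of the four nearest neighbours of `x`. -/
def nnS (σ : Config L) (x : Site L) : ℝ :=
  spin (σ (x + east L)) + spin (σ (x - east L)) +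
    spin (σ (x + north L)) + spin (σ (x - north L))

/-- Single-site heat-bath probability `p_x(a|σ)`. -/
def flipP (β h : ℝ) (σ : Config L) (x : Site L) (a : Bool) : ℝ :=
  1 / (1 + Real.exp (-2 * β * spin a * (nnS σ x + h)))

/-- The PCA transition matrix `P(σ,η) = ∏_x p_x(η(x)|σ)`. -/
def Pmat (β h : ℝ) [NeZero L] (σ η : Config L) : ℝ :=
  ∏ x : Site L, flipP β h σ x (η x)

/-- The four-body Hamiltonian `H_β`. -/
def Ham (β h : ℝ) [NeZero L] (σ : Config L) : ℝ :=
  -(β * h) * ∑ x : Site L, spin (σ x)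
    - ∑ x : Site L, Real.log (Real.cosh (β * (nnS σ x + h)))

/-- The zero-temperature energy `E`. -/
def En (h : ℝ) [NeZero L] (σ : Config L) : ℝ :=
  -h * ∑ x : Site L, spin (σ x) - ∑ x : Site L, |nnS σ x + h|

/-- The zero-temperature drift map `T`. -/
def T (h : ℝ) (σ : Config L) : Config L :=
  fun x => if 0 < nnS σ x + h then true else false

def plusC (L : ℕ) : Config L := fun _ => true
def minusC (L : ℕ) : Config L := fun _ => false

/-- The even chessboard `C_e(x) = (-1)^(x₁+x₂)` (`true` at even-parity sites). -/
def chessE (L : ℕ) : Config L := fun x => decide ((x.1 + x.2).val % 2 = 0)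
def chessO (L : ℕ) : Config L := fun x => !(chessE L x)
def chessSet (L : ℕ) : Set (Config L) := {chessE L, chessO L}

def IsChessCfg {L : ℕ} (C : Config L) : Prop := C = chessE L ∨ C = chessO L

/-- A trap: a stable configuration or an element of a stable pair. -/
def IsTrap (h : ℝ) (σ : Config L) : Prop := T h σ = σ ∨ T h (T h σ) = σ

/-- The trap `σ̂` reached by the downhill path started at `σ`. -/
def hatTrap (h : ℝ) (σ : Config L) : Config L :=
  (T h)^[sInf {n | IsTrap h ((T h)^[n] σ)}] σ

/-- The basin of attraction `𝔅(ζ)` of a trap `ζ`. -/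
def basin (h : ℝ) (ζ : Config L) : Set (Config L) := {σ | hatTrap h σ = ζ}

/-- The interior of a rectangle on the dual lattice: an `a × b` block of sites
with lower-left corner `c`. -/
def rect (c : Site L) (a b : ℕ) : Set (Site L) :=
  { y | ∃ i j : ℕ, i < a ∧ j < b ∧ y = c + ((i : ZMod L), (j : ZMod L)) }

/-- The configuration equal to `ζ` inside the given rectangle and to `bg` outside. -/
def rectCfg (bg ζ : Config L) (c : Site L) (a b : ℕ) : Config L :=
  fun x => if x ∈ rect c a b then ζ x else bg x

/-- Differences between sites at euclidean distance at most `2` on the torus. -/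
def closeDiff (d : Site L) : Prop :=
  ∃ u v : ℤ, u ^ 2 + v ^ 2 ≤ 4 ∧ d = ((u : ZMod L), (v : ZMod L))

/-- Two sets of sites are non-interacting iff all pairs of sites are at
euclidean distance `> 2` (equivalently `≥ √5`). -/
def NonInteracting (A B : Set (Site L)) : Prop :=
  ∀ x ∈ A, ∀ y ∈ B, ¬ closeDiff (y - x)

/-- Nearest-neighbour adjacency on the torus. -/
def Adj (x y : Site L) : Prop :=
  y = x + east L ∨ y = x - east L ∨ y = x + north L ∨ y = x - north L

def stepSet : Set (ℤ × ℤ) := {(1, 0), (-1, 0), (0, 1), (0, -1)}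

/-- `X` contains a nearest-neighbour loop winding around the torus
(a percolating, torus-wrapping, cluster is a cluster containing such a loop). -/
def Wrapping (X : Set (Site L)) : Prop :=
  ∃ (n : ℕ) (f : ℕ → Site L) (d : ℕ → ℤ × ℤ),
    0 < n ∧ f n = f 0 ∧ (∑ i ∈ Finset.range n, d i) ≠ 0 ∧
    ∀ i < n, d i ∈ stepSet ∧
      f (i + 1) = f i + (((d i).1 : ZMod L), ((d i).2 : ZMod L)) ∧ f i ∈ X

/-- `σ` has a well defined sea of the homogeneous phase `α`. -/
def SeaHom (h : ℝ) (α σ : Config L) : Prop :=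
  ∃ X : Set (Site L), Wrapping X ∧ (∀ x ∈ X, σ x = α x) ∧
    ∀ n : ℕ, 1 ≤ n → ∀ x ∈ X, (T h)^[n] σ x = α x

/-- `σ` has a well defined sea of the chessboard `C`. -/
def SeaChess (h : ℝ) (C σ : Config L) : Prop :=
  ∃ X : Set (Site L), Wrapping X ∧ (∀ x ∈ X, σ x = C x) ∧
    ∀ n : ℕ, 1 ≤ n → ∀ x ∈ X, (T h)^[2 * n] σ x = C x

def SeaMinus (h : ℝ) (σ : Config L) : Prop := SeaHom h (minusC L) σ
def SeaPlus (h : ℝ) (σ : Config L) : Prop := SeaHom h (plusC L) σ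
def SeaChessAny (h : ℝ) (σ : Config L) : Prop :=
  SeaChess h (chessE L) σ ∨ SeaChess h (chessO L) σ

/-- Communication height `H(σ,η) = H(σ) - log P(σ,η)`. -/
def commH (β h : ℝ) [NeZero L] (σ η : Config L) : ℝ :=
  Ham β h σ - Real.log (Pmat β h σ η)

/-- Minimal height (minmax) `Φ(σ,η)` over all paths from `σ` to `η`. -/
def Phi (β h : ℝ) [NeZero L] (σ η : Config L) : ℝ :=
  sInf { v | ∃ (n : ℕ) (f : ℕ → Config L), 0 < n ∧ f 0 = σ ∧ f n = η ∧
    v = sSup { w | ∃ i < n, w = commH β h (f i) (f (i + 1)) } }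

/-- The barrier `Υ(η) = min_{ζ ∉ 𝔅(η)} Φ(η,ζ)` to exit the basin of the trap `η`. -/
def Ups (β h : ℝ) [NeZero L] (η : Config L) : ℝ :=
  sInf { v | ∃ ζ : Config L, ζ ∉ basin h η ∧ v = Phi β h η ζ }

/-- Probability, starting from `σ0`, that the first visit to `E` happens
at time `n` and at a state of `F`. -/
def firstHitP (β h : ℝ) [NeZero L] (σ0 : Config L) (E F : Set (Config L)) (n : ℕ) : ℝ :=
  ∑ f : Fin (n + 1) → Config L,
    if f 0 = σ0 ∧ (∀ i : Fin (n + 1), (i : ℕ) < n → f i ∉ E) ∧ f (Fin.last n) ∈ E ∩ F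
    then ∏ i : Fin n, Pmat β h (f i.castSucc) (f i.succ) else 0

/-- `ℙ_{σ0}(τ_A < τ_B)`. -/
def probHitBefore (β h : ℝ) [NeZero L] (σ0 : Config L) (A B : Set (Config L)) : ℝ :=
  ∑' n : ℕ, firstHitP β h σ0 (A ∪ B) (A \ B) n

/-- `ℙ_{σ0}(τ_D ∈ I)` (for `τ_D < ∞`). -/
def probTauIn (β h : ℝ) [NeZero L] (σ0 : Config L) (D : Set (Config L)) (I : Set ℝ) : ℝ :=
  ∑' n : ℕ, if (n : ℝ) ∈ I then firstHitP β h σ0 D Set.univ n else 0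

/-- `ℙ_{σ0}(τ_D > t)` (including the event that `D` is never visited). -/
def probTauGT (β h : ℝ) [NeZero L] (σ0 : Config L) (D : Set (Config L)) (t : ℝ) : ℝ :=
  1 - probTauIn β h σ0 D (Set.Iic t)

/-- `ℙ_{σ0}(σ_{τ_E} ∈ F)`. -/
def probFirstHitIn (β h : ℝ) [NeZero L] (σ0 : Config L) (E F : Set (Config L)) : ℝ :=
  ∑' n : ℕ, firstHitP β h σ0 E F n

/-- The critical length `λ = ⌊2/h⌋ + 1`. -/
def lam (h : ℝ) : ℕ := Nat.floor (2 / h) + 1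

/-- The protocritical height `Γ = -2hλ² + 2λ(4+h) - 2h`. -/
def Gam (h : ℝ) : ℝ :=
  -2 * h * (lam h : ℝ) ^ 2 + 2 * (lam h : ℝ) * (4 + h) - 2 * h

/-- The geometric conditions of Proposition 3.3 (iii) for a trap in the sea of
minuses, with `s` chessboard rectangles (indices `< s`) and `k - s` plus
rectangles (indices `≥ s`). -/
def MinusMultiSpec (h : ℝ) (σ : Config L) (s : ℕ) {k : ℕ}
    (c : Fin k → Site L) (a b : Fin k → ℕ) : Prop :=
  1 ≤ k ∧ s ≤ k ∧
  (∀ i, 2 ≤ min (a i) (b i) ∧ max (a i) (b i) ≤ L - 2) ∧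
  (∀ i j, i ≠ j → Disjoint (rect (c i) (a i) (b i)) (rect (c j) (a j) (b j))) ∧
  (∀ j i : Fin k, (j : ℕ) < s → s ≤ (i : ℕ) →
    NonInteracting (rect (c j) (a j) (b j)) (rect (c i) (a i) (b i))) ∧
  (∀ i j : Fin k, s ≤ (i : ℕ) → s ≤ (j : ℕ) → i ≠ j →
    NonInteracting (rect (c i) (a i) (b i)) (rect (c j) (a j) (b j))) ∧
  (∀ x, (∀ i, x ∉ rect (c i) (a i) (b i)) → σ x = false) ∧
  (∀ i : Fin k, s ≤ (i : ℕ) → ∀ x ∈ rect (c i) (a i) (b i), σ x = true) ∧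
  ∃ Cp : Fin k → Config L,
    (∀ j : Fin k, (j : ℕ) < s → IsChessCfg (Cp j) ∧
      ∃ (k' : ℕ) (c' : Fin k' → Site L) (a' b' : Fin k' → ℕ),
        (∀ i, rect (c' i) (a' i) (b' i) ⊆ rect (c j) (a j) (b j)) ∧
        (∀ i i', i ≠ i' →
          NonInteracting (rect (c' i) (a' i) (b' i)) (rect (c' i') (a' i') (b' i'))) ∧
        (∀ i, ∀ x ∈ rect (c' i) (a' i) (b' i), σ x = true) ∧
        (∀ x ∈ rect (c j) (a j) (b j),
          (∀ i, x ∉ rect (c' i) (a' i) (b' i)) → σ x = Cp j x)) ∧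
    (∀ i j : Fin k, (i : ℕ) < s → (j : ℕ) < s → i ≠ j → Cp i = Cp j →
      NonInteracting (rect (c i) (a i) (b i)) (rect (c j) (a j) (b j)))

/-- `η ∈ 𝒪_{-1}` (a `(λ-1) × λ` chessboard droplet in the sea of minuses) and
`ζ ∈ π_{-1}(η)` is one of its protocritical droplets. -/
def ProtoRel (h : ℝ) (η ζ : Config L) : Prop :=
  ∃ (c : Site L) (a b : ℕ) (C : Config L) (y z : Site L),
    IsChessCfg C ∧
    ((a = lam h - 1 ∧ b = lam h) ∨ (a = lam h ∧ b = lam h - 1)) ∧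
    (∀ x ∈ rect c a b, η x = C x) ∧ (∀ x ∉ rect c a b, η x = false) ∧
    y ∉ rect c a b ∧ z ∈ rect c a b ∧ Adj y z ∧ C z = true ∧
    (∀ x ∈ rect c a b, ζ x = !(C x)) ∧ ζ y = true ∧
    (∀ x, x ∉ rect c a b → x ≠ y → ζ x = false)

/-- The set `𝒪_{-1}` of `(λ-1) × λ` chessboard droplets in the sea of minuses. -/
def OSet (h : ℝ) (L : ℕ) : Set (Config L) :=
  { η | ∃ (c : Site L) (a b : ℕ) (C : Config L),
      IsChessCfg C ∧ ((a = lam h - 1 ∧ b = lam h) ∨ (a = lam h ∧ b = lam h - 1)) ∧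
      (∀ x ∈ rect c a b, η x = C x) ∧ (∀ x ∉ rect c a b, η x = false) }

/-- The set `𝒫_{-1}` of protocritical droplets. -/
def ProtoSet (h : ℝ) (L : ℕ) : Set (Config L) := { ζ | ∃ η, ProtoRel h η ζ }

end

lemma heatbath_aux (t : ℝ) :
    1 / (1 + Real.exp (-(2 * t))) = Real.exp t / (2 * Real.cosh t) := by
  rw [Real.cosh_eq]
  have h1 : (0:ℝ) < 1 + Real.exp (-(2 * t)) := by positivity
  have h2 : (0:ℝ) < Real.exp t + Real.exp (-t) := by positivity
  rw [div_eq_div_iff h1.ne' (by positivity)]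
  have : Real.exp t * (1 + Real.exp (-(2 * t))) = Real.exp t + Real.exp (-t) := by
    rw [mul_add, mul_one, ← Real.exp_add]
    ring_nf
  rw [one_mul, show 2 * ((Real.exp t + Real.exp (-t)) / 2)
    = Real.exp t + Real.exp (-t) by ring]
  linarith [this]

lemma flipP_eq {L : ℕ} (β h : ℝ) (σ : Config L) (x : Site L) (a : Bool) :
    flipP β h σ x a =
      Real.exp (β * spin a * (nnS σ x + h)) / (2 * Real.cosh (β * (nnS σ x + h))) := by
  unfold flipP
  have hcosh : Real.cosh (β * (nnS σ x + h)) = Real.cosh (β * spin a * (nnS σ x + h)) := by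
    cases a
    · simp only [spin, if_neg Bool.false_ne_true]
      rw [show β * (-1 : ℝ) * (nnS σ x + h) = -(β * (nnS σ x + h)) by ring, Real.cosh_neg]
    · simp [spin]
  rw [hcosh, show -2 * β * spin a * (nnS σ x + h)
    = -(2 * (β * spin a * (nnS σ x + h))) by ring]
  exact heatbath_aux _

lemma pmat_exp {L : ℕ} [NeZero L] (β h : ℝ) (σ η : Config L) :
    Pmat β h σ η * Real.exp (-Ham β h σ) =
      Real.exp (β * ∑ x : Site L, spin (η x) * nnS σ x
        + β * h * ∑ x : Site L, spin (η x) + β * h * ∑ x : Site L, spin (σ x))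
        / 2 ^ Fintype.card (Site L) := by
  have hC : (0:ℝ) < ∏ x : Site L, Real.cosh (β * (nnS σ x + h)) :=
    Finset.prod_pos fun x _ => Real.cosh_pos _
  have h1 : Pmat β h σ η =
      Real.exp (∑ x : Site L, β * spin (η x) * (nnS σ x + h)) /
        ((2:ℝ) ^ Fintype.card (Site L) * ∏ x : Site L, Real.cosh (β * (nnS σ x + h))) := by
    rw [Pmat]
    simp_rw [flipP_eq]
    rw [Finset.prod_div_distrib, ← Real.exp_sum, Finset.prod_mul_distrib,
      Finset.prod_const, Finset.card_univ]
  have h2 : Real.exp (-Ham β h σ) =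
      Real.exp (β * h * ∑ x : Site L, spin (σ x)) *
        ∏ x : Site L, Real.cosh (β * (nnS σ x + h)) := by
    rw [Ham, show -((-(β * h) * ∑ x : Site L, spin (σ x))
        - ∑ x : Site L, Real.log (Real.cosh (β * (nnS σ x + h))))
      = β * h * (∑ x : Site L, spin (σ x))
        + ∑ x : Site L, Real.log (Real.cosh (β * (nnS σ x + h))) by ring,
      Real.exp_add, Real.exp_sum]
    congr 1
    apply Finset.prod_congr rfl
    intro x _
    exact Real.exp_log (Real.cosh_pos _)
  have h3 : ∑ x : Site L, β * spin (η x) * (nnS σ x + h) =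
      β * ∑ x : Site L, spin (η x) * nnS σ x + β * h * ∑ x : Site L, spin (η x) := by
    rw [Finset.mul_sum, Finset.mul_sum, ← Finset.sum_add_distrib]
    exact Finset.sum_congr rfl fun x _ => by ring
  rw [h1, h2, h3]
  simp only [Real.exp_add]
  field_simp

lemma shift1 {L : ℕ} [NeZero L] (f g : Site L → ℝ) (v : Site L) :
    ∑ x : Site L, f x * g (x + v) = ∑ x : Site L, g x * f (x - v) := by
  refine Fintype.sum_equiv (Equiv.addRight v) _ _ fun x => ?_
  simp [mul_comm]

lemma sum_swap_nnS {L : ℕ} [NeZero L] (σ η : Config L) :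
    ∑ x : Site L, spin (η x) * nnS σ x = ∑ x : Site L, spin (σ x) * nnS η x := by
  simp_rw [nnS, mul_add, Finset.sum_add_distrib]
  have e1 : ∑ x : Site L, spin (η x) * spin (σ (x + east L))
      = ∑ x : Site L, spin (σ x) * spin (η (x - east L)) :=
    shift1 (fun x => spin (η x)) (fun x => spin (σ x)) (east L)
  have e2 : ∑ x : Site L, spin (η x) * spin (σ (x - east L))
      = ∑ x : Site L, spin (σ x) * spin (η (x + east L)) := by
    have := shift1 (fun x => spin (σ x)) (fun x => spin (η x)) (east L)
    exact this.symm
  have e3 : ∑ x : Site L, spin (η x) * spin (σ (x + north L))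
      = ∑ x : Site L, spin (σ x) * spin (η (x - north L)) :=
    shift1 (fun x => spin (η x)) (fun x => spin (σ x)) (north L)
  have e4 : ∑ x : Site L, spin (η x) * spin (σ (x - north L))
      = ∑ x : Site L, spin (σ x) * spin (η (x + north L)) := by
    have := shift1 (fun x => spin (σ x)) (fun x => spin (η x)) (north L)
    exact this.symm
  rw [e1, e2, e3, e4]
  ring

/-- detailed balance with respect to the Gibbs measure of the
four-body Hamiltonian, and the consequent reversibility w.r.t. `ν`. -/
theorem detailed_balance (L : ℕ) [NeZero L] (β h : ℝ) (hβ : 0 < β) (σ η : Config L) :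
    Pmat β h σ η * Real.exp (-Ham β h σ) = Pmat β h η σ * Real.exp (-Ham β h η) ∧
    Pmat β h σ η * (Real.exp (-Ham β h σ) / ∑ ξ : Config L, Real.exp (-Ham β h ξ)) =
      Pmat β h η σ * (Real.exp (-Ham β h η) / ∑ ξ : Config L, Real.exp (-Ham β h ξ)) := by
  have key : Pmat β h σ η * Real.exp (-Ham β h σ) = Pmat β h η σ * Real.exp (-Ham β h η) := by
    rw [pmat_exp, pmat_exp, sum_swap_nnS σ η]
    ring_nf
  refine ⟨key, ?_⟩
  rw [← mul_div_assoc, ← mul_div_assoc, key]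

end PCA
end

section
/- Assume 0<h<2. The zero-temperature dynamics has no cycles of length greater than two: there exist no n≥3 and pairwise distinct configurations σ_1,…,σ_n∈𝒮 such that σ_{i+1}=Tσ_i for all i=1,…,n−1 and σ_1=Tσ_n. -/
open scoped BigOperators Classical
open Filter

namespace PCA

section GolesOlivos

variable {L : ℕ}

/-- The Lyapunov functional for parallel threshold dynamics. -/
noncomputable def Qf (h : ℝ) [NeZero L] (σ η : Config L) : ℝ :=
  ∑ x : Site L, (-(spin (η x)) * (nnS σ x + h) - h * spin (σ x))

lemma spin_cases (b : Bool) : spin b = 1 ∨ spin b = -1 := by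
  unfold spin; cases b <;> simp

lemma nnS_add_ne (h : ℝ) (h0 : 0 < h) (h2 : h < 2) (σ : Config L) (x : Site L) :
    nnS σ x + h ≠ 0 := by
  unfold nnS
  rcases spin_cases (σ (x + east L)) with h1 | h1 <;>
  rcases spin_cases (σ (x - east L)) with h3 | h3 <;>
  rcases spin_cases (σ (x + north L)) with h4 | h4 <;>
  rcases spin_cases (σ (x - north L)) with h5 | h5 <;>
  rw [h1, h3, h4, h5] <;> intro hcon <;> linarith

lemma min_term_le (c : ℝ) (a : Bool) :
    -(spin (if 0 < c then true else false)) * c ≤ -(spin a) * c := by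
  by_cases hc : 0 < c
  · rw [if_pos hc]
    cases a <;> simp [spin] <;> nlinarith
  · rw [if_neg hc]
    push_neg at hc
    cases a <;> simp [spin] <;> nlinarith

lemma min_term_lt (c : ℝ) (hc : c ≠ 0) (a : Bool)
    (ha : a ≠ (if 0 < c then true else false)) :
    -(spin (if 0 < c then true else false)) * c < -(spin a) * c := by
  rcases lt_or_gt_of_ne hc with hlt | hgt
  · rw [if_neg (not_lt.mpr hlt.le)] at ha ⊢
    cases a
    · exact absurd rfl ha
    · simp [spin]; nlinarith
  · rw [if_pos hgt] at ha ⊢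
    cases a
    · simp [spin]; nlinarith
    · exact absurd rfl ha

lemma sum_shift [NeZero L] (f g : Site L → ℝ) (e : Site L) :
    ∑ x : Site L, f x * g (x + e) = ∑ x : Site L, f (x - e) * g x := by
  apply Fintype.sum_equiv (Equiv.addRight e)
  intro x
  simp

lemma sum_shift' [NeZero L] (f g : Site L → ℝ) (e : Site L) :
    ∑ x : Site L, f x * g (x - e) = ∑ x : Site L, f (x + e) * g x := by
  apply Fintype.sum_equiv (Equiv.subRight e)
  intro x
  simp

lemma Qsum_symm [NeZero L] (σ η : Config L) :
    ∑ x : Site L, spin (η x) * nnS σ x = ∑ x : Site L, spin (σ x) * nnS η x := by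
  unfold nnS
  simp only [mul_add, Finset.sum_add_distrib]
  have h1 : ∀ e : Site L, ∑ x : Site L, spin (η x) * spin (σ (x + e)) =
      ∑ x : Site L, spin (σ x) * spin (η (x - e)) := by
    intro e
    rw [sum_shift (fun x => spin (η x)) (fun x => spin (σ x)) e]
    exact Finset.sum_congr rfl fun x _ => by ring
  have h2 : ∀ e : Site L, ∑ x : Site L, spin (η x) * spin (σ (x - e)) =
      ∑ x : Site L, spin (σ x) * spin (η (x + e)) := by
    intro e
    rw [sum_shift' (fun x => spin (η x)) (fun x => spin (σ x)) e]
    exact Finset.sum_congr rfl fun x _ => by ring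
  rw [h1, h2, h1, h2]
  ring

lemma Qf_eq (h : ℝ) [NeZero L] (σ η : Config L) :
    Qf h σ η = -(∑ x : Site L, spin (η x) * nnS σ x)
      - h * (∑ x : Site L, spin (η x)) - h * (∑ x : Site L, spin (σ x)) := by
  unfold Qf
  rw [Finset.mul_sum, Finset.mul_sum, ← Finset.sum_neg_distrib,
    ← Finset.sum_sub_distrib, ← Finset.sum_sub_distrib]
  exact Finset.sum_congr rfl fun x _ => by ring

lemma Qf_symm (h : ℝ) [NeZero L] (σ η : Config L) : Qf h σ η = Qf h η σ := by
  rw [Qf_eq, Qf_eq, Qsum_symm]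
  ring

lemma Qf_le (h : ℝ) (h0 : 0 < h) (h2 : h < 2) [NeZero L] (σ η : Config L) :
    Qf h σ (T h σ) ≤ Qf h σ η := by
  unfold Qf
  apply Finset.sum_le_sum
  intro x _
  have := min_term_le (nnS σ x + h) (η x)
  unfold T
  linarith

lemma Qf_lt (h : ℝ) (h0 : 0 < h) (h2 : h < 2) [NeZero L] (σ η : Config L)
    (hne : η ≠ T h σ) : Qf h σ (T h σ) < Qf h σ η := by
  have hx : ∃ x, η x ≠ T h σ x := by
    by_contra hcon
    push_neg at hcon
    exact hne (funext hcon)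
  obtain ⟨x0, hx0⟩ := hx
  unfold Qf
  apply Finset.sum_lt_sum
  · intro x _
    have := min_term_le (nnS σ x + h) (η x)
    unfold T
    linarith
  · refine ⟨x0, Finset.mem_univ _, ?_⟩
    have := min_term_lt (nnS σ x0 + h) (nnS_add_ne h h0 h2 σ x0) (η x0)
      (by unfold T at hx0; exact hx0)
    unfold T
    linarith

end GolesOlivos



/-- the zero-temperature dynamics has no cycles of length
greater than two. -/
theorem no_long_cycles (L : ℕ) [NeZero L] (h : ℝ) (h0 : 0 < h) (h2 : h < 2) :
    ¬ ∃ (n : ℕ) (σ : ℕ → Config L), 3 ≤ n ∧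
      (∀ i j, i < n → j < n → i ≠ j → σ i ≠ σ j) ∧
      (∀ i, i + 1 < n → σ (i + 1) = T h (σ i)) ∧
      σ 0 = T h (σ (n - 1)) := by
  rintro ⟨n, σ, hn3, hdist, hstep, hcyc⟩
  set τ : ℕ → Config L := fun i => σ (i % n) with hτdef
  have hn : 0 < n := by omega
  have hone : 1 % n = 1 := Nat.mod_eq_of_lt (by omega)
  have hτ : ∀ i, τ (i + 1) = T h (τ i) := by
    intro i
    have hi : i % n < n := Nat.mod_lt _ hn
    have key : (i + 1) % n = (i % n + 1) % n := by
      conv_lhs => rw [Nat.add_mod, hone]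
    by_cases hc : i % n + 1 < n
    · simp only [hτdef]
      rw [key, Nat.mod_eq_of_lt hc]
      exact hstep _ hc
    · have h1 : i % n = n - 1 := by omega
      simp only [hτdef]
      rw [key, h1, show n - 1 + 1 = n by omega, Nat.mod_self, ← h1]
      rw [h1]
      exact hcyc
  set F : ℕ → ℝ := fun i => Qf h (τ i) (τ (i + 1)) with hFdef
  have hmono : ∀ i, F (i + 1) ≤ F i := by
    intro i
    have e : F (i + 1) = Qf h (τ (i + 1)) (T h (τ (i + 1))) := by
      simp only [hFdef, hτ (i + 1)]
    rw [e]
    calc Qf h (τ (i + 1)) (T h (τ (i + 1))) ≤ Qf h (τ (i + 1)) (τ i) :=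
          Qf_le h h0 h2 _ _
      _ = F i := Qf_symm h _ _
  have hper : τ 2 = τ 0 := by
    by_contra hne
    have hstrict : F 1 < F 0 := by
      have e1 : F 1 = Qf h (τ 1) (T h (τ 1)) := by simp only [hFdef, hτ 1]
      have e0 : F 0 = Qf h (τ 1) (τ 0) := Qf_symm h _ _
      rw [e1, e0]
      apply Qf_lt h h0 h2
      intro hcon
      exact hne ((hτ 1).trans hcon.symm)
    have hchain : ∀ m, F (1 + m) ≤ F 1 := by
      intro m
      induction m with
      | zero => exact le_refl _
      | succ k ih => exact le_trans (hmono (1 + k)) ih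
    have hFn : F n = F 0 := by
      have e1 : τ n = τ 0 := by simp [hτdef, Nat.mod_self]
      have e2 : τ (n + 1) = τ 1 := by
        have : (n + 1) % n = 1 := by
          rw [show n + 1 = 1 + 1 * n by ring, Nat.add_mul_mod_self_right, hone]
        simp only [hτdef, this, hone]
      simp only [hFdef, e1, e2]
    have hle : F n ≤ F 1 := by
      have := hchain (n - 1)
      rwa [show 1 + (n - 1) = n by omega] at this
    linarith
  have hσ : σ 2 = σ 0 := by
    have e2 : (2 : ℕ) % n = 2 := Nat.mod_eq_of_lt (by omega)
    have e0 : (0 : ℕ) % n = 0 := Nat.zero_mod n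
    simpa [hτdef, e2, e0] using hper
  exact hdist 2 0 (by omega) (by omega) (by omega) hσ
end PCA
end
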